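/- Consider the fixed-design linear model y = Xβ + e with X ∈ ℝ^{n×2}, orthonormal design XᵀX = n·I₂, β = (β₁,β₂), and noise e ∈ ℝⁿ with law ⨂ⁿ N(0, γ²), γ > 0. Fix λ ≥ 0 and let β̂_{R,λ} = (XᵀX + nλI₂)⁻¹Xᵀy be the ridge (L₂-regularized) estimate. Then the causality accuracy C(β̂_{R,λ}) = P[(β̂_{R,λ})₁ > (β̂_{R,λ})₂] satisfies C(β̂_{R,λ}) = Φ( (√n/γ) · (β₁ − β₂)/√2 ), independently of λ, where Φ is the standard Gaussian CDF and the probability is taken over the noise measure ⨂ⁿ N(0, γ²). -/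

import Mathlib

open MeasureTheory ProbabilityTheory Matrix Finset

/-- The cumulative distribution function `Φ` of the standard Gaussian
measure `N(0,1)`. -/
noncomputable def stdGaussianCDF (t : ℝ) : ℝ :=
  ((gaussianReal 0 1) (Set.Iic t)).toReal

section Helpers
open Real
open scoped NNReal ENNReal

lemma pdf_conv_pointwise (v1 v2 : ℝ≥0) (hv1 : v1 ≠ 0) (hv2 : v2 ≠ 0) (u x : ℝ) :
    gaussianPDFReal 0 v1 x * gaussianPDFReal 0 v2 (u - x)
      = gaussianPDFReal 0 (v1 + v2) u *
        gaussianPDFReal ((v1 : ℝ) * u / ((v1 : ℝ) + v2)) (v1 * v2 / (v1 + v2)) x := by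
  have hp : (0:ℝ) < v1 := lt_of_le_of_ne (v1.coe_nonneg) (by exact_mod_cast (Ne.symm hv1))
  have hq : (0:ℝ) < v2 := lt_of_le_of_ne (v2.coe_nonneg) (by exact_mod_cast (Ne.symm hv2))
  have hs : (0:ℝ) < (v1:ℝ) + v2 := by linarith
  have hw : ((v1 * v2 / (v1 + v2) : ℝ≥0) : ℝ) = (v1:ℝ) * v2 / ((v1:ℝ) + v2) := by
    push_cast [NNReal.coe_div]; ring
  simp only [gaussianPDFReal, sub_zero, NNReal.coe_add, hw]
  have hπ : (0:ℝ) < π := Real.pi_pos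
  have hconst : (√(2 * π * v1))⁻¹ * (√(2 * π * v2))⁻¹
      = (√(2 * π * ((v1:ℝ) + v2)))⁻¹ * (√(2 * π * ((v1:ℝ) * v2 / ((v1:ℝ) + v2))))⁻¹ := by
    rw [← mul_inv, ← mul_inv, ← Real.sqrt_mul (by positivity), ← Real.sqrt_mul (by positivity)]
    congr 1
    field_simp
  have hexp : -x ^ 2 / (2 * (v1:ℝ)) + -(u - x) ^ 2 / (2 * (v2:ℝ))
      = -u ^ 2 / (2 * ((v1:ℝ) + v2)) +
        -(x - (v1:ℝ) * u / ((v1:ℝ) + v2)) ^ 2 / (2 * ((v1:ℝ) * v2 / ((v1:ℝ) + v2))) := by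
    field_simp
    ring
  rw [mul_mul_mul_comm, ← Real.exp_add, hexp, hconst, Real.exp_add, ← mul_mul_mul_comm]

lemma pdf_conv_integral (v1 v2 : ℝ≥0) (hv1 : v1 ≠ 0) (hv2 : v2 ≠ 0) (u : ℝ) :
    ∫ x, gaussianPDFReal 0 v1 x * gaussianPDFReal 0 v2 (u - x)
      = gaussianPDFReal 0 (v1 + v2) u := by
  have hw : v1 * v2 / (v1 + v2) ≠ 0 := by
    positivity
  simp_rw [pdf_conv_pointwise v1 v2 hv1 hv2 u]
  rw [integral_const_mul, integral_gaussianPDFReal_eq_one _ hw, mul_one]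

lemma pdf_conv_integrable (v1 v2 : ℝ≥0) (hv1 : v1 ≠ 0) (hv2 : v2 ≠ 0) (u : ℝ) :
    Integrable (fun x => gaussianPDFReal 0 v1 x * gaussianPDFReal 0 v2 (u - x)) := by
  simp_rw [pdf_conv_pointwise v1 v2 hv1 hv2 u]
  exact (integrable_gaussianPDFReal _ _).const_mul _

lemma pdf_conv_lintegral (v1 v2 : ℝ≥0) (hv1 : v1 ≠ 0) (hv2 : v2 ≠ 0) (u : ℝ) :
    ∫⁻ x, gaussianPDF 0 v1 x * gaussianPDF 0 v2 (u - x) = gaussianPDF 0 (v1 + v2) u := by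
  simp only [gaussianPDF]
  simp_rw [← ENNReal.ofReal_mul (gaussianPDFReal_nonneg _ _ _)]
  rw [← ofReal_integral_eq_lintegral_ofReal (pdf_conv_integrable v1 v2 hv1 hv2 u)
      (ae_of_all _ fun x => mul_nonneg (gaussianPDFReal_nonneg _ _ _)
        (gaussianPDFReal_nonneg _ _ _)),
    pdf_conv_integral v1 v2 hv1 hv2 u]

lemma gaussian_conv (v1 v2 : ℝ≥0) :
    ((gaussianReal 0 v1).prod (gaussianReal 0 v2)).map (fun p : ℝ × ℝ => p.1 + p.2)
      = gaussianReal 0 (v1 + v2) := by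
  have hadd : Measurable (fun p : ℝ × ℝ => p.1 + p.2) := measurable_fst.add measurable_snd
  by_cases hv1 : v1 = 0
  · subst hv1
    rw [gaussianReal_zero_var, Measure.dirac_prod, Measure.map_map hadd measurable_prodMk_left,
      zero_add]
    have : (fun p : ℝ × ℝ => p.1 + p.2) ∘ Prod.mk (0:ℝ) = fun y : ℝ => 0 + y := rfl
    rw [this]
    simp only [zero_add]
    exact Measure.map_id
  by_cases hv2 : v2 = 0
  · subst hv2
    rw [gaussianReal_zero_var, Measure.prod_dirac,
      Measure.map_map hadd (measurable_prodMk_right), add_zero]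
    have : (fun p : ℝ × ℝ => p.1 + p.2) ∘ (fun x : ℝ => (x, (0:ℝ))) = fun x : ℝ => x + 0 := rfl
    rw [this]
    simp only [add_zero]
    exact Measure.map_id
  -- main case
  ext s hs
  rw [Measure.map_apply hadd hs, Measure.prod_apply (hadd hs)]
  have h2 : ∀ x : ℝ, gaussianReal 0 v2 (Prod.mk x ⁻¹' ((fun p : ℝ × ℝ => p.1 + p.2) ⁻¹' s))
      = ∫⁻ z, s.indicator (fun z => gaussianPDF 0 v2 (z - x)) z := by
    intro x
    have hT : MeasurableSet ((fun y : ℝ => x + y) ⁻¹' s) := (measurable_const.add measurable_id) hs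
    have hpre : Prod.mk x ⁻¹' ((fun p : ℝ × ℝ => p.1 + p.2) ⁻¹' s) = (fun y : ℝ => x + y) ⁻¹' s := rfl
    rw [hpre, gaussianReal_of_var_ne_zero _ hv2, withDensity_apply _ hT,
      ← lintegral_indicator hT]
    have := lintegral_add_right_eq_self (μ := volume)
      (fun z => ((fun y : ℝ => x + y) ⁻¹' s).indicator (gaussianPDF 0 v2) (z - x)) x
    simp only [add_sub_cancel_right] at this
    rw [this]
    congr 1
    ext z
    by_cases hz : z ∈ s
    · have hz' : z - x ∈ (fun y : ℝ => x + y) ⁻¹' s := by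
        simp [Set.mem_preimage, add_sub_cancel, hz]
      rw [Set.indicator_of_mem hz', Set.indicator_of_mem hz]
    · have hz' : z - x ∉ (fun y : ℝ => x + y) ⁻¹' s := by
        simp only [Set.mem_preimage, add_sub_cancel]; exact hz
      rw [Set.indicator_of_notMem hz', Set.indicator_of_notMem hz]
  simp_rw [h2]
  have hG : Measurable (Function.uncurry fun (x z : ℝ) =>
      s.indicator (fun z => gaussianPDF 0 v2 (z - x)) z) := by
    have : (Function.uncurry fun (x z : ℝ) => s.indicator (fun z => gaussianPDF 0 v2 (z - x)) z)
        = Set.indicator {p : ℝ × ℝ | p.2 ∈ s} (fun p => gaussianPDF 0 v2 (p.2 - p.1)) := by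
      ext p
      rcases p with ⟨x, z⟩
      by_cases hz : z ∈ s <;>
        simp [Function.uncurry, Set.indicator, hz]
    rw [this]
    exact Measurable.indicator ((measurable_gaussianPDF _ _).comp
      (measurable_snd.sub measurable_fst)) (measurable_snd hs)
  rw [gaussianReal_of_var_ne_zero _ hv1,
    lintegral_withDensity_eq_lintegral_mul _ (measurable_gaussianPDF _ _)
      hG.lintegral_prod_right]
  simp only [Pi.mul_apply]
  have hmul : ∀ x : ℝ, gaussianPDF 0 v1 x * ∫⁻ z, s.indicator (fun z => gaussianPDF 0 v2 (z - x)) z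
      = ∫⁻ z, gaussianPDF 0 v1 x * s.indicator (fun z => gaussianPDF 0 v2 (z - x)) z := by
    intro x
    rw [lintegral_const_mul]
    exact hG.comp measurable_prodMk_left
  simp_rw [hmul]
  rw [lintegral_lintegral_swap]
  swap
  · exact (((measurable_gaussianPDF 0 v1).comp measurable_fst).mul hG).aemeasurable
  have hin : ∀ y : ℝ, (∫⁻ x, gaussianPDF 0 v1 x * s.indicator (fun z => gaussianPDF 0 v2 (z - x)) y)
      = s.indicator (gaussianPDF 0 (v1 + v2)) y := by
    intro y
    by_cases hy : y ∈ s
    · simp only [Set.indicator_of_mem hy]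
      exact pdf_conv_lintegral v1 v2 hv1 hv2 y
    · simp [Set.indicator_of_notMem hy]
  simp_rw [hin]
  have hvv : v1 + v2 ≠ 0 := fun h => hv1 (by simpa using (add_eq_zero.mp h).1)
  rw [lintegral_indicator hs, gaussianReal_of_var_ne_zero _ hvv, withDensity_apply _ hs]

lemma map_pi_sum (v : ℝ≥0) : ∀ (n : ℕ) (a : Fin n → ℝ),
    Measure.map (fun e : Fin n → ℝ => ∑ i, a i * e i)
        (Measure.pi fun _ : Fin n => gaussianReal 0 v)
      = gaussianReal 0 ((∑ i, (a i)^2 : ℝ).toNNReal * v) := by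
  intro n
  induction n with
  | zero =>
    intro a
    have : (fun e : Fin 0 → ℝ => ∑ i, a i * e i) = fun _ => (0:ℝ) := by
      ext e; simp
    rw [this]
    simp only [Finset.univ_eq_empty, Finset.sum_empty, Real.toNNReal_zero, zero_mul,
      gaussianReal_zero_var]
    rw [Measure.map_const, measure_univ, one_smul]
  | succ n ih =>
    intro a
    have hmp := measurePreserving_piFinSuccAbove (fun _ : Fin (n+1) => gaussianReal 0 v) 0
    set e := MeasurableEquiv.piFinSuccAbove (fun _ : Fin (n+1) => ℝ) 0
    have hsum : (fun f : Fin (n+1) → ℝ => ∑ i, a i * f i)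
        = (fun p : ℝ × (Fin n → ℝ) => a 0 * p.1 + ∑ j, a (Fin.succAbove 0 j) * p.2 j) ∘ e := by
      ext f
      simp only [Function.comp_apply, e, MeasurableEquiv.piFinSuccAbove_apply]
      rw [Fin.sum_univ_succAbove (fun i => a i * f i) 0]
      rfl
    rw [hsum, ← Measure.map_map (by fun_prop) e.measurable, hmp.map_eq]
    have hsplit : (fun p : ℝ × (Fin n → ℝ) => a 0 * p.1 + ∑ j, a (Fin.succAbove 0 j) * p.2 j)
        = (fun q : ℝ × ℝ => q.1 + q.2) ∘
          (Prod.map (fun x : ℝ => a 0 * x) (fun f : Fin n → ℝ => ∑ j, a (Fin.succAbove 0 j) * f j)) := by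
      ext p; rfl
    rw [hsplit, ← Measure.map_map (by fun_prop : Measurable (fun q : ℝ × ℝ => q.1 + q.2)) (by fun_prop),
      ← Measure.map_prod_map _ _ (by fun_prop) (by fun_prop),
      gaussianReal_map_const_mul, ih, mul_zero, gaussian_conv]
    congr 1
    rw [Fin.sum_univ_succAbove (fun i => (a i)^2) 0]
    apply NNReal.coe_injective
    push_cast [NNReal.coe_mul, Real.coe_toNNReal _ (by positivity : (0:ℝ) ≤ ∑ j, a (Fin.succAbove 0 j) ^ 2),
      Real.coe_toNNReal _ (by positivity : (0:ℝ) ≤ a 0 ^2 + ∑ j, a (Fin.succAbove 0 j) ^ 2)]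
    ring


lemma gaussianReal_Iio (v : ℝ≥0) (t : ℝ) (hv : v ≠ 0) :
    gaussianReal 0 v (Set.Iio t) = gaussianReal 0 v (Set.Iic t) := by
  have h1 : gaussianReal 0 v {t} = 0 :=
    gaussianReal_absolutelyContinuous 0 hv (measure_singleton t)
  rw [← Set.Iio_union_right, measure_union (by simp) (measurableSet_singleton t), h1, add_zero]

/-- **Theorem 1, Eq. (4), exact Gaussian form.**
In the fixed-design model `y = Xβ + e` with orthonormal design `XᵀX = n·I₂`
and noise `e ~ ⨂ⁿ N(0,γ²)`, the causality accuracy of the ridge estimate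
`β̂_{R,λ} = (XᵀX + nλI₂)⁻¹ Xᵀ y` is
`C(β̂_{R,λ}) = Φ((√n/γ)·(β₁ − β₂)/√2)`, independently of `λ`. -/
theorem ridge_causality_accuracy
    (n : ℕ) (hn : 1 ≤ n)
    (X : Matrix (Fin n) (Fin 2) ℝ)
    (hX : Xᵀ * X = (n : ℝ) • (1 : Matrix (Fin 2) (Fin 2) ℝ))
    (β : Fin 2 → ℝ) (γ : ℝ) (hγ : 0 < γ)
    (lam : ℝ) (hlam : 0 ≤ lam) :
    let μnoise : Measure (Fin n → ℝ) :=
      Measure.pi fun _ : Fin n => gaussianReal 0 (Real.toNNReal (γ ^ 2))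
    let βR : (Fin n → ℝ) → (Fin 2 → ℝ) := fun e =>
      (Xᵀ * X + (n : ℝ) • lam • (1 : Matrix (Fin 2) (Fin 2) ℝ))⁻¹ *ᵥ
        (Xᵀ *ᵥ (X *ᵥ β + e))
    (μnoise {e | βR e 0 > βR e 1}).toReal
      = stdGaussianCDF ((Real.sqrt n / γ) * ((β 0 - β 1) / Real.sqrt 2)) := by
  intro μnoise βR
  have hn' : (0:ℝ) < n := by exact_mod_cast hn
  set c : ℝ := (n:ℝ) * (1 + lam) with hc_def
  have hc : 0 < c := by positivity
  -- matrix algebra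
  have hM : Xᵀ * X + (n : ℝ) • lam • (1 : Matrix (Fin 2) (Fin 2) ℝ)
      = c • (1 : Matrix (Fin 2) (Fin 2) ℝ) := by
    rw [hX]
    ext i j
    simp only [Matrix.add_apply, Matrix.smul_apply, smul_eq_mul, hc_def]
    ring
  have hMinv : (c • (1 : Matrix (Fin 2) (Fin 2) ℝ))⁻¹ = c⁻¹ • 1 := by
    apply Matrix.inv_eq_right_inv
    rw [Matrix.smul_mul, Matrix.mul_smul, one_mul, smul_smul, mul_inv_cancel₀ hc.ne', one_smul]
  have hβR : ∀ (e : Fin n → ℝ) (j : Fin 2),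
      βR e j = c⁻¹ * ((n:ℝ) * β j + ∑ i, X i j * e i) := by
    intro e j
    show ((Xᵀ * X + (n : ℝ) • lam • (1 : Matrix (Fin 2) (Fin 2) ℝ))⁻¹ *ᵥ
        (Xᵀ *ᵥ (X *ᵥ β + e))) j = _
    rw [hM, hMinv, Matrix.smul_mulVec, Matrix.one_mulVec, Matrix.mulVec_add,
      Matrix.mulVec_mulVec, hX, Matrix.smul_mulVec, Matrix.one_mulVec]
    simp only [Pi.smul_apply, Pi.add_apply, smul_eq_mul, Matrix.mulVec, dotProduct,
      Matrix.transpose_apply]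
  -- the event
  set a : Fin n → ℝ := fun i => X i 1 - X i 0 with ha_def
  have hevent : {e : Fin n → ℝ | βR e 0 > βR e 1}
      = (fun e : Fin n → ℝ => ∑ i, a i * e i) ⁻¹' Set.Iio ((n:ℝ) * (β 0 - β 1)) := by
    ext e
    simp only [Set.mem_setOf_eq, Set.mem_preimage, Set.mem_Iio, gt_iff_lt, hβR,
      mul_lt_mul_iff_right₀ (inv_pos.mpr hc)]
    constructor
    · intro h
      have := sub_lt_sub_right h ((n:ℝ) * β 1 + ∑ i, X i 0 * e i)
      simp only [ha_def, sub_mul, Finset.sum_sub_distrib]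
      nlinarith [h]
    · intro h
      simp only [ha_def, sub_mul, Finset.sum_sub_distrib] at h
      nlinarith [h]
  -- column sums
  have h00 : ∑ i, X i 0 * X i 0 = (n:ℝ) := by
    have h := congrFun (congrFun hX 0) 0
    simpa [Matrix.mul_apply, Matrix.transpose_apply, Matrix.smul_apply, Matrix.one_apply] using h
  have h11 : ∑ i, X i 1 * X i 1 = (n:ℝ) := by
    have h := congrFun (congrFun hX 1) 1
    simpa [Matrix.mul_apply, Matrix.transpose_apply, Matrix.smul_apply, Matrix.one_apply] using h
  have h01 : ∑ i, X i 0 * X i 1 = 0 := by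
    have h := congrFun (congrFun hX 0) 1
    simpa [Matrix.mul_apply, Matrix.transpose_apply, Matrix.smul_apply, Matrix.one_apply] using h
  have hsum : ∑ i, (a i)^2 = 2 * (n:ℝ) := by
    have : ∀ i ∈ Finset.univ, (a i)^2
        = X i 1 * X i 1 - 2 * (X i 0 * X i 1) + X i 0 * X i 0 := by
      intro i _; simp only [ha_def]; ring
    rw [Finset.sum_congr rfl this, Finset.sum_add_distrib, Finset.sum_sub_distrib,
      ← Finset.mul_sum, h00, h11, h01]
    ring
  -- the distribution of the linear statistic
  rw [hevent, ← Measure.map_apply (by fun_prop) measurableSet_Iio, map_pi_sum, hsum]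
  set cσ : ℝ := Real.sqrt (2 * (n:ℝ) * γ^2) with hcσ_def
  have hcσpos : 0 < cσ := Real.sqrt_pos.mpr (by positivity)
  set t : ℝ := (Real.sqrt n / γ) * ((β 0 - β 1) / Real.sqrt 2) with ht_def
  have hmap : Measure.map (fun x : ℝ => cσ * x) (gaussianReal 0 1)
      = gaussianReal 0 ((2 * (n:ℝ)).toNNReal * (γ^2).toNNReal) := by
    rw [show (fun x : ℝ => cσ * x) = (cσ * ·) from rfl, gaussianReal_map_const_mul, mul_zero]
    congr 1
    apply NNReal.coe_injective
    push_cast [Real.coe_toNNReal _ (by positivity : (0:ℝ) ≤ 2*(n:ℝ)),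
      Real.coe_toNNReal _ (by positivity : (0:ℝ) ≤ γ^2)]
    rw [mul_one, hcσ_def, Real.sq_sqrt (by positivity)]
  rw [← hmap, Measure.map_apply (measurable_const_mul cσ) measurableSet_Iio]
  have hcσ : cσ = Real.sqrt 2 * Real.sqrt n * γ := by
    rw [hcσ_def, Real.sqrt_mul (by positivity), Real.sqrt_sq hγ.le,
      Real.sqrt_mul (by norm_num)]
  have hct : (n:ℝ) * (β 0 - β 1) = cσ * t := by
    rw [hcσ, ht_def]
    have h2 : Real.sqrt (n:ℝ) * Real.sqrt (n:ℝ) = (n:ℝ) := Real.mul_self_sqrt hn'.le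
    have hs2 : Real.sqrt 2 ≠ 0 := by positivity
    field_simp
    linear_combination (-(β 0 - β 1)) * h2
  have hpre : (fun x : ℝ => cσ * x) ⁻¹' Set.Iio ((n:ℝ) * (β 0 - β 1)) = Set.Iio t := by
    ext x
    simp only [Set.mem_preimage, Set.mem_Iio, hct, mul_lt_mul_iff_right₀ hcσpos]
  rw [hpre, gaussianReal_Iio 1 t one_ne_zero]
  rfl

end Helpers
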